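/- Suppose for real sequences: a ≤ 1 ≤ b and for all primes p, a ≤ E[X_p²] ≤ b, where X_p are independent mean-zero random variables and θ_ℓ = ∏_{p|ℓ}X_p for squarefree ℓ (0 otherwise). Then there exist constants c, C₁, C₂ > 0 such that for all sufficiently large n: C₁ · n^{1 − c|ln a|/ln ln n} ≤ E[(∑_{ℓ=1}^n θ_ℓ)²] ≤ C₂ · n^{1 + c·(ln b)/ln ln n}. -/

import Mathlib

open MeasureTheory ProbabilityTheory

section Aux

lemma card_factorial_le_prod' : ∀ (s : Finset ℕ), (∀ x ∈ s, 2 ≤ x) →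
    Nat.factorial s.card ≤ ∏ x ∈ s, x := by
  intro s
  induction s using Finset.strongInduction with
  | _ s ih =>
    intro hs
    rcases s.eq_empty_or_nonempty with rfl | hne
    · simp
    · set m := s.max' hne with hmdef
      have hm : m ∈ s := s.max'_mem hne
      have hsub : s ⊆ Finset.Icc 2 m := fun x hx => Finset.mem_Icc.2 ⟨hs x hx, s.le_max' x hx⟩
      have h1 : s.card ≤ m := by
        calc s.card ≤ (Finset.Icc 2 m).card := Finset.card_le_card hsub
        _ = m + 1 - 2 := by rw [Nat.card_Icc]
        _ ≤ m := by omega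
      have hcard : s.card = (s.erase m).card + 1 := by
        rw [Finset.card_erase_of_mem hm]
        have : 1 ≤ s.card := Finset.card_pos.2 hne
        omega
      have hih := ih (s.erase m) (Finset.erase_ssubset hm)
        (fun x hx => hs x (Finset.mem_of_mem_erase hx))
      calc Nat.factorial s.card = s.card * Nat.factorial (s.erase m).card := by
            rw [hcard, Nat.factorial_succ]
      _ ≤ m * ∏ x ∈ s.erase m, x := Nat.mul_le_mul h1 hih
      _ = ∏ x ∈ s, x := Finset.mul_prod_erase s id hm

lemma pow_half_le_factorial' (k : ℕ) : (k/2 + 1)^(k/2) ≤ Nat.factorial k := by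
  have h := @Nat.factorial_mul_pow_le_factorial (k - k/2) (k/2)
  have h2 : k - k/2 + k/2 = k := by omega
  rw [h2] at h
  calc (k/2+1)^(k/2) ≤ (k - k/2 + 1)^(k/2) := Nat.pow_le_pow_left (by omega) _
  _ ≤ (Nat.factorial (k - k/2)) * (k - k/2 + 1)^(k/2) :=
      Nat.le_mul_of_pos_left _ (Nat.factorial_pos _)
  _ ≤ Nat.factorial k := h

lemma omega_bound' : ∀ n : ℕ, ⌈Real.exp (Real.exp 49)⌉₊ ≤ n →
    ∀ k : ℕ, Nat.factorial k ≤ n →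
    (k : ℝ) ≤ 3 * Real.log n / Real.log (Real.log n) := by
  intro n hn k hk
  have hn1 : Real.exp (Real.exp 49) ≤ (n:ℝ) := le_trans (Nat.le_ceil _) (by exact_mod_cast hn)
  have hnpos : (0:ℝ) < n := lt_of_lt_of_le (Real.exp_pos _) hn1
  have hlogn : Real.exp 49 ≤ Real.log n := by
    rw [← Real.log_exp (Real.exp 49)]
    exact Real.log_le_log (Real.exp_pos _) hn1
  have hlognpos : (0:ℝ) < Real.log n := lt_of_lt_of_le (Real.exp_pos _) hlogn
  set y := Real.log (Real.log n) with hy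
  have hy49 : (49:ℝ) ≤ y := by
    rw [hy, ← Real.log_exp 49]
    exact Real.log_le_log (Real.exp_pos _) hlogn
  have hypos : (0:ℝ) < y := by linarith
  have hexpy : Real.exp y = Real.log n := Real.exp_log hlognpos
  set L := Real.log n / y with hL
  have hLy : L * y = Real.log n := by rw [hL]; exact div_mul_cancel₀ _ (ne_of_gt hypos)
  have hsq : (1 + y/2) ≤ Real.exp (y/2) := by
    have := Real.add_one_le_exp (y/2); linarith
  have hexpy2 : Real.exp (y/2) * Real.exp (y/2) = Real.exp y := by
    rw [← Real.exp_add]; ring_nf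
  have hL12 : 12 * y ≤ Real.exp y := by
    have h1 : (0:ℝ) ≤ 1 + y/2 := by linarith
    nlinarith [mul_le_mul hsq hsq h1 (le_of_lt (Real.exp_pos _))]
  have hLge : 12 ≤ L := by
    rw [hL, le_div_iff₀ hypos, ← hexpy]; linarith
  have hLpos : 0 < L := by linarith
  have hsqrty : Real.sqrt y * Real.sqrt y = y := Real.mul_self_sqrt (le_of_lt hypos)
  have hsqrt7 : 7 ≤ Real.sqrt y := by
    have h49 : Real.sqrt 49 ≤ Real.sqrt y := Real.sqrt_le_sqrt hy49
    have : Real.sqrt 49 = 7 := by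
      rw [show (49:ℝ) = 7^2 by norm_num, Real.sqrt_sq (by norm_num : (0:ℝ) ≤ 7)]
    linarith
  have hlogy : Real.log y ≤ 2 * Real.sqrt y := by
    have h1 : Real.log (Real.sqrt y) ≤ Real.sqrt y - 1 :=
      Real.log_le_sub_one_of_pos (by linarith)
    have h2 : Real.log (Real.sqrt y) = Real.log y / 2 := Real.log_sqrt (le_of_lt hypos)
    linarith
  have hygap : y - 2 * Real.sqrt y ≥ 5 * y / 7 := by
    nlinarith [hsqrt7, hsqrty, Real.sqrt_nonneg y]
  have hygappos : 0 < y - 2 * Real.sqrt y := by nlinarith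
  by_contra hcon
  push_neg at hcon
  have hkL : 3 * L < (k:ℝ) := by
    have h3 : 3 * L = 3 * Real.log n / y := by rw [hL]; ring
    linarith
  set j := k / 2 with hj
  have h2j : (k:ℝ) ≤ 2 * (j:ℝ) + 1 := by
    have hnat : k ≤ 2 * j + 1 := by omega
    exact_mod_cast hnat
  have hjreal : 1.4 * L < (j:ℝ) := by linarith
  have hjn : ((j:ℝ) + 1)^j ≤ (n:ℝ) := by
    have := le_trans (pow_half_le_factorial' k) hk
    exact_mod_cast this
  have hlogjn : (j:ℝ) * Real.log ((j:ℝ) + 1) ≤ Real.log n := by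
    have := Real.log_le_log (by positivity) hjn
    rwa [Real.log_pow] at this
  have hlogj : y - 2 * Real.sqrt y ≤ Real.log ((j:ℝ) + 1) := by
    have hLj : L ≤ (j:ℝ) + 1 := by nlinarith
    have h1 : Real.log L ≤ Real.log ((j:ℝ)+1) := Real.log_le_log hLpos hLj
    have h2 : Real.log L = y - Real.log y := by
      rw [hL, ← hexpy, Real.log_div (by positivity) (ne_of_gt hypos), Real.log_exp]
    linarith
  have hfinal : Real.log n < Real.log n := by
    calc Real.log n = L * y := hLy.symm
    _ = 1.4 * L * (5 * y / 7) := by ring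
    _ ≤ 1.4 * L * (y - 2 * Real.sqrt y) :=
        mul_le_mul_of_nonneg_left hygap (by linarith)
    _ < (j:ℝ) * (y - 2 * Real.sqrt y) := mul_lt_mul_of_pos_right hjreal hygappos
    _ ≤ (j:ℝ) * Real.log ((j:ℝ)+1) :=
        mul_le_mul_of_nonneg_left hlogj (Nat.cast_nonneg j)
    _ ≤ Real.log n := hlogjn
  exact lt_irrefl _ hfinal

lemma sum_inv_sq_le' (M : ℕ) : ∑ m ∈ Finset.Icc 2 M, (1:ℝ)/(m:ℝ)^2 ≤ 2/3 := by
  have key : ∀ M : ℕ, 1 ≤ M → ∑ m ∈ Finset.Icc 2 M, (1:ℝ)/(m:ℝ)^2 ≤ 2/3 - 1/((M:ℝ)+1/2) := by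
    intro M hM
    induction M with
    | zero => omega
    | succ M ih =>
      rcases Nat.eq_or_lt_of_le hM with h1 | h1
      · simp [← h1]; norm_num
      · have hM1 : 1 ≤ M := by omega
        rw [Finset.sum_Icc_succ_top (by omega)]
        have hM' : (1:ℝ) ≤ M := by exact_mod_cast hM1
        have : (1:ℝ)/((M:ℝ)+1)^2 ≤ 1/((M:ℝ)+1/2) - 1/((M:ℝ)+1+1/2) := by
          rw [div_sub_div _ _ (by nlinarith) (by nlinarith)]
          rw [div_le_div_iff₀ (by nlinarith) (by nlinarith)]
          push_cast
          ring_nf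
          nlinarith
        have := ih hM1
        push_cast
        push_cast at this
        linarith
  rcases Nat.lt_or_ge M 1 with h | h
  · interval_cases M <;> simp <;> norm_num
  · have h2 := key M h
    have h3 : (0:ℝ) < (M:ℝ) + 1/2 := by positivity
    nlinarith [one_div_pos.2 h3]

lemma sf_count' (n : ℕ) :
    (n:ℝ)/3 ≤ (((Finset.Icc 1 n).filter (fun ℓ => Squarefree ℓ)).card : ℝ) := by
  classical
  set S := (Finset.Icc 1 n).filter (fun ℓ => Squarefree ℓ) with hS
  set T := (Finset.Icc 1 n).filter (fun ℓ => ¬ Squarefree ℓ) with hT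
  have hsum : S.card + T.card = n := by
    rw [hS, hT, Finset.card_filter_add_card_filter_not, Nat.card_Icc]; omega
  have hTsub : T ⊆ (Finset.Icc 2 n).biUnion
      (fun m => (Finset.Icc 1 n).filter (fun ℓ => m*m ∣ ℓ)) := by
    intro ℓ hℓ
    rw [hT, Finset.mem_filter, Finset.mem_Icc] at hℓ
    obtain ⟨⟨h1, h2⟩, hnsf⟩ := hℓ
    have hℓ0 : ℓ ≠ 0 := by omega
    have : ¬ (∀ p, p.Prime → ¬ p*p ∣ ℓ) := by
      rw [← Nat.squarefree_iff_prime_squarefree]; exact hnsf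
    push_neg at this
    obtain ⟨p, hp, hdvd⟩ := this
    have hple : p*p ≤ ℓ := Nat.le_of_dvd (by omega) hdvd
    have hpn : p ≤ n := by nlinarith [hp.two_le]
    exact Finset.mem_biUnion.2 ⟨p, Finset.mem_Icc.2 ⟨hp.two_le, hpn⟩,
      Finset.mem_filter.2 ⟨Finset.mem_Icc.2 ⟨h1, h2⟩, hdvd⟩⟩
  have hTcard : (T.card : ℝ) ≤ (n:ℝ) * (2/3) := by
    have h1 : T.card ≤ ∑ m ∈ Finset.Icc 2 n, ((Finset.Icc 1 n).filter (fun ℓ => m*m ∣ ℓ)).card :=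
      le_trans (Finset.card_le_card hTsub) (Finset.card_biUnion_le)
    have h2 : ∀ m : ℕ, ((Finset.Icc 1 n).filter (fun ℓ => m*m ∣ ℓ)).card = n / (m*m) := by
      intro m
      rw [show Finset.Icc 1 n = Finset.Ioc 0 n from rfl]
      exact Nat.Ioc_filter_dvd_card_eq_div n (m*m)
    calc (T.card : ℝ) ≤ ∑ m ∈ Finset.Icc 2 n, ((n / (m*m) : ℕ) : ℝ) := by
          rw [← Nat.cast_sum]
          exact_mod_cast le_trans h1 (le_of_eq (Finset.sum_congr rfl (fun m _ => h2 m)))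
    _ ≤ ∑ m ∈ Finset.Icc 2 n, (n:ℝ) * (1/(m:ℝ)^2) := by
          apply Finset.sum_le_sum
          intro m hm
          calc ((n / (m*m) : ℕ) : ℝ) ≤ (n:ℝ) / ((m*m : ℕ) : ℝ) :=
                Nat.cast_div_le
          _ = (n:ℝ) * (1/(m:ℝ)^2) := by push_cast; ring
    _ = (n:ℝ) * ∑ m ∈ Finset.Icc 2 n, (1:ℝ)/(m:ℝ)^2 := by rw [Finset.mul_sum]
    _ ≤ (n:ℝ) * (2/3) :=
          mul_le_mul_of_nonneg_left (sum_inv_sq_le' n) (Nat.cast_nonneg n)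
  have : (S.card : ℝ) + (T.card : ℝ) = (n : ℝ) := by exact_mod_cast hsum
  linarith

variable {Ω : Type*} [MeasurableSpace Ω] {μ : Measure Ω} [IsProbabilityMeasure μ]

lemma indep_prod_integral' (g : ℕ → Ω → ℝ)
    (hind : iIndepFun g μ) (hm : ∀ i, Measurable (g i)) :
    ∀ s : Finset ℕ, (∀ i ∈ s, Integrable (g i) μ) →
      Integrable (fun ω => ∏ i ∈ s, g i ω) μ ∧
      ∫ ω, ∏ i ∈ s, g i ω ∂μ = ∏ i ∈ s, ∫ ω, g i ω ∂μ := by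
  intro s
  induction s using Finset.induction_on with
  | empty => simp
  | @insert a s ha ih =>
    intro hint
    have hint' : ∀ i ∈ s, Integrable (g i) μ := fun i hi => hint i (Finset.mem_insert_of_mem hi)
    obtain ⟨ih1, ih2⟩ := ih hint'
    have hindep : IndepFun (g a) (fun ω => ∏ i ∈ s, g i ω) μ := by
      have := (hind.indepFun_finsetProd_of_notMem hm ha).symm
      have heq : (∏ j ∈ s, g j) = fun ω => ∏ i ∈ s, g i ω := by
        funext ω; exact Finset.prod_apply ω s g
      rwa [heq] at this
    have hmul : Integrable (fun ω => g a ω * ∏ i ∈ s, g i ω) μ := by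
      have := hindep.integrable_mul (hint a (Finset.mem_insert_self a s)) ih1
      exact this
    constructor
    · have heq : (fun ω => ∏ i ∈ insert a s, g i ω) = fun ω => g a ω * ∏ i ∈ s, g i ω := by
        funext ω; exact Finset.prod_insert ha
      rw [heq]; exact hmul
    · have heq : (fun ω => ∏ i ∈ insert a s, g i ω) = fun ω => g a ω * ∏ i ∈ s, g i ω := by
        funext ω; exact Finset.prod_insert ha
      rw [heq, Finset.prod_insert ha, ← ih2]
      exact hindep.integral_mul_eq_mul_integral (hint a (Finset.mem_insert_self a s)).aestronglyMeasurable ih1.aestronglyMeasurable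

lemma pair_integral' (X : ℕ → Ω → ℝ) (hmeas : ∀ p, Measurable (X p))
    (hind : iIndepFun X μ)
    (hL2 : ∀ p : ℕ, p.Prime → MemLp (X p) 2 μ)
    (s t : Finset ℕ) (hs : ∀ p ∈ s, p.Prime) (ht : ∀ p ∈ t, p.Prime) :
    Integrable (fun ω => (∏ p ∈ s, X p ω) * ∏ p ∈ t, X p ω) μ ∧
    ∫ ω, (∏ p ∈ s, X p ω) * ∏ p ∈ t, X p ω ∂μ =
      (∏ p ∈ s ∩ t, ∫ ω, (X p ω)^2 ∂μ) * ∏ p ∈ (s ∪ t) \ (s ∩ t), ∫ ω, X p ω ∂μ := by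
  classical
  set g : ℕ → ℝ → ℝ := fun p x => if p ∈ s ∩ t then x^2 else x with hg
  set h : ℕ → Ω → ℝ := fun p => fun ω => g p (X p ω) with hh
  have hgm : ∀ p, Measurable (g p) := by
    intro p
    by_cases hp : p ∈ s ∩ t <;> simp only [hg, hp, if_true, if_false] <;> fun_prop
  have hhind : iIndepFun h μ := iIndepFun.comp hind g hgm
  have hhm : ∀ p, Measurable (h p) := fun p => (hgm p).comp (hmeas p)
  have hhint : ∀ p ∈ s ∪ t, Integrable (h p) μ := by
    intro p hp
    have hprime : p.Prime := by
      rcases Finset.mem_union.1 hp with h' | h'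
      exacts [hs p h', ht p h']
    by_cases hpc : p ∈ s ∩ t
    · have : h p = fun ω => (X p ω)^2 := by funext ω; simp only [hh, hg]; rw [if_pos hpc]
      rw [this]; exact (hL2 p hprime).integrable_sq
    · have : h p = X p := by funext ω; simp only [hh, hg]; rw [if_neg hpc]
      rw [this]; exact (hL2 p hprime).integrable one_le_two
  obtain ⟨hI, hE⟩ := indep_prod_integral' h hhind hhm (s ∪ t) hhint
  have hpt : ∀ ω, (∏ p ∈ s, X p ω) * ∏ p ∈ t, X p ω = ∏ p ∈ s ∪ t, h p ω := by
    intro ω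
    have hsplit : ∏ p ∈ s ∪ t, h p ω =
        (∏ p ∈ (s ∪ t) ∩ (s ∩ t), h p ω) * ∏ p ∈ (s ∪ t) \ (s ∩ t), h p ω :=
      (Finset.prod_inter_mul_prod_diff (s ∪ t) (s ∩ t) _).symm
    have hint_eq : (s ∪ t) ∩ (s ∩ t) = s ∩ t := by
      apply Finset.inter_eq_right.2
      intro x hx; exact Finset.mem_union_left t (Finset.mem_inter.1 hx).1
    have hdiff_eq : (s ∪ t) \ (s ∩ t) = (s \ t) ∪ (t \ s) := by
      ext x; simp only [Finset.mem_sdiff, Finset.mem_union, Finset.mem_inter]; tauto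
    have hdisj : Disjoint (s \ t) (t \ s) := by
      rw [Finset.disjoint_left]; intro x hx hx'
      simp only [Finset.mem_sdiff] at hx hx'; tauto
    rw [hsplit, hint_eq, hdiff_eq, Finset.prod_union hdisj]
    have e1 : ∏ p ∈ s ∩ t, h p ω = ∏ p ∈ s ∩ t, (X p ω)^2 :=
      Finset.prod_congr rfl (fun p hp => by simp only [hh, hg]; rw [if_pos hp])
    have e2 : ∏ p ∈ s \ t, h p ω = ∏ p ∈ s \ t, X p ω :=
      Finset.prod_congr rfl (fun p hp => by
        simp only [hh, hg]
        rw [if_neg]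
        simp only [Finset.mem_sdiff, Finset.mem_inter] at hp ⊢
        tauto)
    have e3 : ∏ p ∈ t \ s, h p ω = ∏ p ∈ t \ s, X p ω :=
      Finset.prod_congr rfl (fun p hp => by
        simp only [hh, hg]
        rw [if_neg]
        simp only [Finset.mem_sdiff, Finset.mem_inter] at hp ⊢
        tauto)
    rw [e1, e2, e3]
    have f1 : (∏ p ∈ s ∩ t, X p ω) * ∏ p ∈ s \ t, X p ω = ∏ p ∈ s, X p ω :=
      Finset.prod_inter_mul_prod_diff s t _
    have f2 : (∏ p ∈ t ∩ s, X p ω) * ∏ p ∈ t \ s, X p ω = ∏ p ∈ t, X p ω :=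
      Finset.prod_inter_mul_prod_diff t s _
    rw [← f1, ← f2, Finset.inter_comm t s, Finset.prod_pow]
    ring
  have hfun : (fun ω => (∏ p ∈ s, X p ω) * ∏ p ∈ t, X p ω) = fun ω => ∏ p ∈ s ∪ t, h p ω := by
    funext ω; exact hpt ω
  constructor
  · rw [hfun]; exact hI
  · rw [show (∫ ω, (∏ p ∈ s, X p ω) * ∏ p ∈ t, X p ω ∂μ) = ∫ ω, ∏ p ∈ s ∪ t, h p ω ∂μ by
      rw [hfun]]
    rw [hE]
    rw [← Finset.prod_inter_mul_prod_diff (s ∪ t) (s ∩ t) (fun p => ∫ ω, h p ω ∂μ)]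
    have hint_eq : (s ∪ t) ∩ (s ∩ t) = s ∩ t := by
      apply Finset.inter_eq_right.2
      intro x hx; exact Finset.mem_union_left t (Finset.mem_inter.1 hx).1
    rw [hint_eq]
    congr 1
    · exact Finset.prod_congr rfl (fun p hp => by
        congr 1; funext ω; simp only [hh, hg]; rw [if_pos hp])
    · exact Finset.prod_congr rfl (fun p hp => by
        congr 1; funext ω
        simp only [hh, hg]
        rw [if_neg (Finset.mem_sdiff.1 hp).2])

lemma key2' (X : ℕ → Ω → ℝ) (hmeas : ∀ p, Measurable (X p))
    (hind : iIndepFun X μ)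
    (hL2 : ∀ p : ℕ, p.Prime → MemLp (X p) 2 μ)
    (hmean : ∀ p : ℕ, p.Prime → ∫ ω, X p ω ∂μ = 0)
    (θ : ℕ → Ω → ℝ)
    (hθ : ∀ ℓ : ℕ, θ ℓ =
      if Squarefree ℓ then (fun ω => ∏ p ∈ ℓ.primeFactors, X p ω) else 0)
    (ℓ m : ℕ) :
    Integrable (fun ω => θ ℓ ω * θ m ω) μ ∧
    ∫ ω, θ ℓ ω * θ m ω ∂μ = if ℓ = m then
      (if Squarefree ℓ then ∏ p ∈ ℓ.primeFactors, ∫ ω, (X p ω)^2 ∂μ else 0) else 0 := by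
  classical
  by_cases hsfℓ : Squarefree ℓ
  · by_cases hsfm : Squarefree m
    · have hfeq : (fun ω => θ ℓ ω * θ m ω) =
          (fun ω => (∏ p ∈ ℓ.primeFactors, X p ω) * ∏ p ∈ m.primeFactors, X p ω) := by
        funext ω; rw [hθ ℓ, hθ m, if_pos hsfℓ, if_pos hsfm]
      obtain ⟨hI, hE⟩ := pair_integral' X hmeas hind hL2 ℓ.primeFactors m.primeFactors
        (fun p hp => Nat.prime_of_mem_primeFactors hp)
        (fun p hp => Nat.prime_of_mem_primeFactors hp)
      refine ⟨by rw [hfeq]; exact hI, ?_⟩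
      rw [hfeq] at *
      rw [hE]
      by_cases hlm : ℓ = m
      · subst hlm
        rw [if_pos rfl, if_pos hsfℓ, Finset.inter_self, Finset.union_self, Finset.sdiff_self]
        simp
      · rw [if_neg hlm]
        have hst : ℓ.primeFactors ≠ m.primeFactors := by
          intro heq
          apply hlm
          rw [← Nat.prod_primeFactors_of_squarefree hsfℓ,
            ← Nat.prod_primeFactors_of_squarefree hsfm, heq]
        have hne : ((ℓ.primeFactors ∪ m.primeFactors) \
            (ℓ.primeFactors ∩ m.primeFactors)).Nonempty := by
          rw [Finset.sdiff_nonempty]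
          intro hsub
          apply hst
          apply Finset.Subset.antisymm
          · intro x hx
            have := hsub (Finset.mem_union_left _ hx)
            exact (Finset.mem_inter.1 this).2
          · intro x hx
            have := hsub (Finset.mem_union_right _ hx)
            exact (Finset.mem_inter.1 this).1
        obtain ⟨p, hp⟩ := hne
        have hprime : p.Prime := by
          have := (Finset.mem_sdiff.1 hp).1
          rcases Finset.mem_union.1 this with h' | h'
          exacts [Nat.prime_of_mem_primeFactors h', Nat.prime_of_mem_primeFactors h']
        rw [Finset.prod_eq_zero hp (hmean p hprime), mul_zero]
    · have hfeq : (fun ω => θ ℓ ω * θ m ω) = (fun _ => (0:ℝ)) := by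
        funext ω; rw [hθ m, if_neg hsfm]; simp
      rw [hfeq]
      refine ⟨integrable_const 0, ?_⟩
      have hlm : ℓ ≠ m := by rintro rfl; exact hsfm hsfℓ
      rw [if_neg hlm]; simp
  · have hfeq : (fun ω => θ ℓ ω * θ m ω) = (fun _ => (0:ℝ)) := by
      funext ω; rw [hθ ℓ, if_neg hsfℓ]; simp
    rw [hfeq]
    refine ⟨integrable_const 0, ?_⟩
    by_cases hlm : ℓ = m
    · subst hlm; simp [hsfℓ]
    · simp [hlm]

end Aux

theorem variance_Sn_almost_linear
    {Ω : Type*} [MeasurableSpace Ω] (μ : Measure Ω) [IsProbabilityMeasure μ]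
    (X : ℕ → Ω → ℝ) (hmeas : ∀ p, Measurable (X p))
    (hind : iIndepFun X μ)
    (hL2 : ∀ p : ℕ, p.Prime → MemLp (X p) 2 μ)
    (hmean : ∀ p : ℕ, p.Prime → ∫ ω, X p ω ∂μ = 0)
    (a b : ℝ) (ha : 0 < a) (hab : a ≤ 1 ∧ 1 ≤ b)
    (hvar : ∀ p : ℕ, p.Prime → a ≤ ∫ ω, (X p ω) ^ 2 ∂μ ∧ ∫ ω, (X p ω) ^ 2 ∂μ ≤ b)
    (θ : ℕ → Ω → ℝ)
    (hθ : ∀ ℓ : ℕ, θ ℓ =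
      if Squarefree ℓ then (fun ω => ∏ p ∈ ℓ.primeFactors, X p ω) else 0) :
    ∃ c > 0, ∃ C₁ > 0, ∃ C₂ > 0, ∃ N : ℕ, ∀ n : ℕ, N ≤ n →
      C₁ * (n : ℝ) ^ (1 - c * |Real.log a| / Real.log (Real.log n)) ≤
        ∫ ω, (∑ ℓ ∈ Finset.Icc 1 n, θ ℓ ω) ^ 2 ∂μ ∧
      ∫ ω, (∑ ℓ ∈ Finset.Icc 1 n, θ ℓ ω) ^ 2 ∂μ ≤
        C₂ * (n : ℝ) ^ (1 + c * Real.log b / Real.log (Real.log n)) := by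
  classical
  refine ⟨3, by norm_num, 1/3, by norm_num, 1, by norm_num, ⌈Real.exp (Real.exp 49)⌉₊, ?_⟩
  intro n hn
  -- basic facts about n
  have hn1 : Real.exp (Real.exp 49) ≤ (n:ℝ) := le_trans (Nat.le_ceil _) (by exact_mod_cast hn)
  have hnpos : (0:ℝ) < n := lt_of_lt_of_le (Real.exp_pos _) hn1
  have hlogn : Real.exp 49 ≤ Real.log n := by
    rw [← Real.log_exp (Real.exp 49)]
    exact Real.log_le_log (Real.exp_pos _) hn1
  have hlognpos : (0:ℝ) < Real.log n := lt_of_lt_of_le (Real.exp_pos _) hlogn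
  set y := Real.log (Real.log (n:ℝ)) with hydef
  have hy49 : (49:ℝ) ≤ y := by
    rw [hydef, ← Real.log_exp 49]
    exact Real.log_le_log (Real.exp_pos _) hlogn
  have hypos : (0:ℝ) < y := by linarith
  set L := Real.log n / y with hLdef
  have hLpos : 0 < L := div_pos hlognpos hypos
  -- bound on number of prime factors
  have homega : ∀ ℓ ∈ Finset.Icc 1 n, (ℓ.primeFactors.card : ℝ) ≤ 3 * L := by
    intro ℓ hℓ
    rw [Finset.mem_Icc] at hℓ
    have hfac : Nat.factorial ℓ.primeFactors.card ≤ n := by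
      calc Nat.factorial ℓ.primeFactors.card ≤ ∏ p ∈ ℓ.primeFactors, p :=
        card_factorial_le_prod' _ (fun p hp => (Nat.prime_of_mem_primeFactors hp).two_le)
      _ ≤ ℓ := Nat.le_of_dvd (by omega) (Nat.prod_primeFactors_dvd ℓ)
      _ ≤ n := hℓ.2
    have h1 := omega_bound' n hn _ hfac
    have h2 : 3 * L = 3 * Real.log n / y := by rw [hLdef]; ring
    rw [h2]
    exact h1
  -- variance formula
  have hVar : ∫ ω, (∑ ℓ ∈ Finset.Icc 1 n, θ ℓ ω) ^ 2 ∂μ =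
      ∑ ℓ ∈ Finset.Icc 1 n,
        (if Squarefree ℓ then ∏ p ∈ ℓ.primeFactors, ∫ ω, (X p ω)^2 ∂μ else 0) := by
    have hpt : ∀ ω : Ω, (∑ ℓ ∈ Finset.Icc 1 n, θ ℓ ω) ^ 2 =
        ∑ q ∈ (Finset.Icc 1 n) ×ˢ (Finset.Icc 1 n), θ q.1 ω * θ q.2 ω := by
      intro ω
      rw [sq, Finset.sum_mul_sum, ← Finset.sum_product']
    have hfeq : (fun ω => (∑ ℓ ∈ Finset.Icc 1 n, θ ℓ ω) ^ 2) =
        (fun ω => ∑ q ∈ (Finset.Icc 1 n) ×ˢ (Finset.Icc 1 n), θ q.1 ω * θ q.2 ω) := by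
      funext ω; exact hpt ω
    calc ∫ ω, (∑ ℓ ∈ Finset.Icc 1 n, θ ℓ ω) ^ 2 ∂μ
        = ∫ ω, ∑ q ∈ (Finset.Icc 1 n) ×ˢ (Finset.Icc 1 n), θ q.1 ω * θ q.2 ω ∂μ := by
          rw [hfeq]
    _ = ∑ q ∈ (Finset.Icc 1 n) ×ˢ (Finset.Icc 1 n), ∫ ω, θ q.1 ω * θ q.2 ω ∂μ :=
          integral_finset_sum _ (fun q _ =>
            (key2' X hmeas hind hL2 hmean θ hθ q.1 q.2).1)
    _ = ∑ q ∈ (Finset.Icc 1 n) ×ˢ (Finset.Icc 1 n), (if q.1 = q.2 then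
          (if Squarefree q.1 then ∏ p ∈ q.1.primeFactors, ∫ ω, (X p ω)^2 ∂μ else 0) else 0) :=
          Finset.sum_congr rfl (fun q _ => (key2' X hmeas hind hL2 hmean θ hθ q.1 q.2).2)
    _ = ∑ ℓ ∈ Finset.Icc 1 n, ∑ m ∈ Finset.Icc 1 n, (if ℓ = m then
          (if Squarefree ℓ then ∏ p ∈ ℓ.primeFactors, ∫ ω, (X p ω)^2 ∂μ else 0) else 0) :=
          Finset.sum_product _ _ _
    _ = ∑ ℓ ∈ Finset.Icc 1 n,
          (if Squarefree ℓ then ∏ p ∈ ℓ.primeFactors, ∫ ω, (X p ω)^2 ∂μ else 0) := by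
          apply Finset.sum_congr rfl
          intro ℓ hℓ
          rw [Finset.sum_ite_eq (Finset.Icc 1 n) ℓ
            (fun _ => if Squarefree ℓ then ∏ p ∈ ℓ.primeFactors, ∫ ω, (X p ω)^2 ∂μ else 0),
            if_pos hℓ]
  have hEnn : ∀ p : ℕ, (0:ℝ) ≤ ∫ ω, (X p ω)^2 ∂μ :=
    fun p => integral_nonneg (fun ω => sq_nonneg _)
  have hloga : Real.log a ≤ 0 := Real.log_nonpos (le_of_lt ha) hab.1
  have habs : |Real.log a| = - Real.log a := abs_of_nonpos hloga
  have hbpos : (0:ℝ) < b := lt_of_lt_of_le one_pos hab.2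
  set A := (n:ℝ) ^ (-(3 * |Real.log a| / y)) with hA
  set B := (n:ℝ) ^ (3 * Real.log b / y) with hB
  have hApos : 0 < A := Real.rpow_pos_of_pos hnpos _
  have hBpos : 0 < B := Real.rpow_pos_of_pos hnpos _
  -- A as power of a
  have hAa : A = a ^ (3 * L : ℝ) := by
    rw [hA, Real.rpow_def_of_pos hnpos, Real.rpow_def_of_pos ha]
    congr 1
    rw [habs, hLdef]
    field_simp
  have hBb : B = b ^ (3 * L : ℝ) := by
    rw [hB, Real.rpow_def_of_pos hnpos, Real.rpow_def_of_pos hbpos]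
    congr 1
    rw [hLdef]
    field_simp
  constructor
  · -- lower bound
    rw [hVar]
    have hterm : ∀ ℓ ∈ Finset.Icc 1 n,
        (if Squarefree ℓ then A else 0) ≤
        (if Squarefree ℓ then ∏ p ∈ ℓ.primeFactors, ∫ ω, (X p ω)^2 ∂μ else 0) := by
      intro ℓ hℓ
      by_cases hsf : Squarefree ℓ
      · rw [if_pos hsf, if_pos hsf]
        have h1 : a ^ (ℓ.primeFactors.card) ≤ ∏ p ∈ ℓ.primeFactors, ∫ ω, (X p ω)^2 ∂μ := by
          rw [← Finset.prod_const]
          exact Finset.prod_le_prod (fun p _ => le_of_lt ha)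
            (fun p hp => (hvar p (Nat.prime_of_mem_primeFactors hp)).1)
        have h2 : a ^ (3 * L : ℝ) ≤ a ^ ((ℓ.primeFactors.card : ℝ)) :=
          Real.rpow_le_rpow_of_exponent_ge ha hab.1 (homega ℓ hℓ)
        rw [Real.rpow_natCast] at h2
        rw [hAa]
        exact le_trans h2 h1
      · rw [if_neg hsf, if_neg hsf]
    have hsum1 : ∑ ℓ ∈ Finset.Icc 1 n, (if Squarefree ℓ then A else 0) ≤
        ∑ ℓ ∈ Finset.Icc 1 n,
          (if Squarefree ℓ then ∏ p ∈ ℓ.primeFactors, ∫ ω, (X p ω)^2 ∂μ else 0) :=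
      Finset.sum_le_sum hterm
    have hsum2 : ∑ ℓ ∈ Finset.Icc 1 n, (if Squarefree ℓ then A else 0) =
        (((Finset.Icc 1 n).filter (fun ℓ => Squarefree ℓ)).card : ℝ) * A := by
      rw [← Finset.sum_filter, Finset.sum_const, nsmul_eq_mul]
    have hcount := sf_count' n
    have hlhs : (1/3 : ℝ) * (n:ℝ) ^ (1 - 3 * |Real.log a| / y) = ((n:ℝ)/3) * A := by
      rw [hA]
      have : (1 : ℝ) - 3 * |Real.log a| / y = 1 + (-(3 * |Real.log a| / y)) := by ring
      rw [this, Real.rpow_add hnpos, Real.rpow_one]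
      ring
    rw [hlhs]
    calc ((n:ℝ)/3) * A ≤ (((Finset.Icc 1 n).filter (fun ℓ => Squarefree ℓ)).card : ℝ) * A :=
          mul_le_mul_of_nonneg_right hcount (le_of_lt hApos)
    _ = ∑ ℓ ∈ Finset.Icc 1 n, (if Squarefree ℓ then A else 0) := hsum2.symm
    _ ≤ _ := hsum1
  · -- upper bound
    rw [hVar]
    have hterm : ∀ ℓ ∈ Finset.Icc 1 n,
        (if Squarefree ℓ then ∏ p ∈ ℓ.primeFactors, ∫ ω, (X p ω)^2 ∂μ else 0) ≤ B := by
      intro ℓ hℓ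
      by_cases hsf : Squarefree ℓ
      · rw [if_pos hsf]
        have h1 : ∏ p ∈ ℓ.primeFactors, ∫ ω, (X p ω)^2 ∂μ ≤ b ^ (ℓ.primeFactors.card) := by
          rw [← Finset.prod_const]
          exact Finset.prod_le_prod (fun p _ => hEnn p)
            (fun p hp => (hvar p (Nat.prime_of_mem_primeFactors hp)).2)
        have h2 : b ^ ((ℓ.primeFactors.card : ℝ)) ≤ b ^ (3 * L : ℝ) :=
          Real.rpow_le_rpow_of_exponent_le hab.2 (homega ℓ hℓ)
        rw [Real.rpow_natCast] at h2
        rw [hBb]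
        exact le_trans h1 h2
      · rw [if_neg hsf]; exact le_of_lt hBpos
    calc ∑ ℓ ∈ Finset.Icc 1 n,
          (if Squarefree ℓ then ∏ p ∈ ℓ.primeFactors, ∫ ω, (X p ω)^2 ∂μ else 0)
        ≤ (Finset.Icc 1 n).card • B := Finset.sum_le_card_nsmul _ _ B hterm
    _ = (n:ℝ) * B := by rw [Nat.card_Icc, nsmul_eq_mul]; norm_num
    _ = 1 * (n:ℝ) ^ (1 + 3 * Real.log b / y) := by
        rw [hB, Real.rpow_add hnpos, Real.rpow_one]; ring
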